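/- Let n ≥ 2, k ≥ 1, and let c : Fin n → ((Fin n → Fin k) → ℝ) be the payoff functions of an n-player finite game in which every player has strategy set Fin k. The game is potential if and only if for all players i < j, every strategy profile s : Fin n → Fin k, and all x, y : Fin k, writing d x y = c j (update (update s i x) j y) − c i (update (update s i x) j y), one has d x y = (1/k)·(∑ y' : Fin k, d x y') + (1/k)·(∑ x' : Fin k, d x' y) − (1/k²)·(∑ x' : Fin k, ∑ y' : Fin k, d x' y'). -/

import Mathlib

/-- An `n`-player finite game with payoff functions `c` (each player has strategy
set `Fin k`) is potential if it admits a potential function `p`. -/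
def IsPotentialGame {n k : ℕ} (c : Fin n → (Fin n → Fin k) → ℝ) : Prop :=
  ∃ p : (Fin n → Fin k) → ℝ,
    ∀ (i : Fin n) (s : Fin n → Fin k) (x y : Fin k),
      c i (Function.update s i x) - c i (Function.update s i y) =
        p (Function.update s i x) - p (Function.update s i y)

/-- The relative payoff `d x y = c j (s[i:=x][j:=y]) - c i (s[i:=x][j:=y])`. -/
def relPay {n k : ℕ} (c : Fin n → (Fin n → Fin k) → ℝ) (i j : Fin n)
    (s : Fin n → Fin k) (x y : Fin k) : ℝ :=
  c j (Function.update (Function.update s i x) j y)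
    - c i (Function.update (Function.update s i x) j y)

/-- symmetric four-cycle condition for players `i`, `m`. -/
def Cyc {n k : ℕ} (c : Fin n → (Fin n → Fin k) → ℝ) (i m : Fin n) : Prop :=
  ∀ (t : Fin n → Fin k) (x y a b : Fin k),
    c i (Function.update (Function.update t i x) m a)
      - c i (Function.update (Function.update t i y) m a)
      - c i (Function.update (Function.update t i x) m b)
      + c i (Function.update (Function.update t i y) m b)
    = c m (Function.update (Function.update t i x) m a)
      - c m (Function.update (Function.update t i x) m b)
      - c m (Function.update (Function.update t i y) m a)
      + c m (Function.update (Function.update t i y) m b)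

lemma cyc_symm {n k : ℕ} {c : Fin n → (Fin n → Fin k) → ℝ} {i m : Fin n}
    (h : i ≠ m) (hc : Cyc c i m) : Cyc c m i := by
  intro t x y a b
  have h2 := hc t a b x y
  simp only [Function.update_comm h.symm]
  linarith

/-- cycle condition for relPay from the averaging identity -/
lemma cyc_of_avg {n k : ℕ} {c : Fin n → (Fin n → Fin k) → ℝ} {i j : Fin n}
    (hij : i < j)
    (H : ∀ (s : Fin n → Fin k) (x y : Fin k),
      relPay c i j s x y =
        (1 / (k : ℝ)) * (∑ y' : Fin k, relPay c i j s x y')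
          + (1 / (k : ℝ)) * (∑ x' : Fin k, relPay c i j s x' y)
          - (1 / ((k : ℝ) ^ 2)) * (∑ x' : Fin k, ∑ y' : Fin k, relPay c i j s x' y')) :
    Cyc c i j := by
  intro t x y a b
  have h1 := H t x a
  have h2 := H t x b
  have h3 := H t y a
  have h4 := H t y b
  have key : relPay c i j t x a + relPay c i j t y b
      = relPay c i j t x b + relPay c i j t y a := by
    rw [h1, h2, h3, h4]; ring
  simp only [relPay] at key
  linarith

/-- averaging identity from the cycle condition -/
lemma avg_of_cyc {n k : ℕ} (hk : 1 ≤ k) {c : Fin n → (Fin n → Fin k) → ℝ} {i j : Fin n}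
    (hij : i ≠ j) (hc : Cyc c i j) (s : Fin n → Fin k) (x y : Fin k) :
    relPay c i j s x y =
      (1 / (k : ℝ)) * (∑ y' : Fin k, relPay c i j s x y')
        + (1 / (k : ℝ)) * (∑ x' : Fin k, relPay c i j s x' y)
        - (1 / ((k : ℝ) ^ 2)) * (∑ x' : Fin k, ∑ y' : Fin k, relPay c i j s x' y') := by
  have hcyc : ∀ x' y' : Fin k,
      relPay c i j s x y + relPay c i j s x' y' =
        relPay c i j s x y' + relPay c i j s x' y := by
    intro x' y'
    have := hc s x x' y y'
    simp only [relPay]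
    linarith
  have hsum : ∑ x' : Fin k, ∑ y' : Fin k,
        (relPay c i j s x y + relPay c i j s x' y') =
      ∑ x' : Fin k, ∑ y' : Fin k,
        (relPay c i j s x y' + relPay c i j s x' y) := by
    refine Finset.sum_congr rfl fun x' _ => Finset.sum_congr rfl fun y' _ => hcyc x' y'
  have hk0 : (k : ℝ) ≠ 0 := by positivity
  simp only [Finset.sum_add_distrib, Finset.sum_const, Finset.card_univ, Fintype.card_fin,
    nsmul_eq_mul, ← Finset.mul_sum] at hsum
  have hval : (k:ℝ)^2 * relPay c i j s x y =
      (k:ℝ) * (∑ y' : Fin k, relPay c i j s x y')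
      + (k:ℝ) * (∑ x' : Fin k, relPay c i j s x' y)
      - (∑ x' : Fin k, ∑ y' : Fin k, relPay c i j s x' y') := by linarith
  field_simp
  linear_combination hval

lemma cyc_of_potential {n k : ℕ} {c : Fin n → (Fin n → Fin k) → ℝ}
    (hp : IsPotentialGame c) {i j : Fin n} (hij : i ≠ j) : Cyc c i j := by
  obtain ⟨p, hp⟩ := hp
  intro t x y a b
  have hja := hp j (Function.update t i x) a b
  have hjb := hp j (Function.update t i y) a b
  have hia := hp i (Function.update t j a) x y
  have hib := hp i (Function.update t j b) x y
  simp only [Function.update_comm hij.symm] at hia hib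
  linarith

/-- the partial profile: coordinates `< m` from `s`, the rest `b0`. -/
def sig {n k : ℕ} (b0 : Fin k) (s : Fin n → Fin k) (m : ℕ) : Fin n → Fin k :=
  fun j => if (j : ℕ) < m then s j else b0

lemma sig_succ {n k : ℕ} (b0 : Fin k) (s : Fin n → Fin k) (m : Fin n) :
    sig b0 s ((m : ℕ) + 1) = Function.update (sig b0 s m) m (s m) := by
  funext j
  by_cases hj : j = m
  · subst hj; simp [sig]
  · have hj' : (j : ℕ) ≠ (m : ℕ) := fun h => hj (Fin.ext h)
    rw [Function.update_of_ne hj]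
    simp only [sig]
    by_cases h2 : (j : ℕ) < (m : ℕ)
    · rw [if_pos h2, if_pos (by omega)]
    · rw [if_neg h2, if_neg (by omega)]

lemma sig_update {n k : ℕ} (b0 : Fin k) (s : Fin n → Fin k) (i : Fin n) (x : Fin k) (m : ℕ) :
    sig b0 (Function.update s i x) m =
      if (i : ℕ) < m then Function.update (sig b0 s m) i x else sig b0 s m := by
  by_cases him : (i : ℕ) < m
  · rw [if_pos him]; funext j
    by_cases hj : j = i
    · subst hj; simp [sig, him]
    · rw [Function.update_of_ne hj]; simp [sig, Function.update_of_ne hj]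
  · rw [if_neg him]; funext j
    by_cases hj : j = i
    · subst hj; simp only [sig]
      rw [if_neg (by omega), if_neg (by omega)]
    · simp [sig, Function.update_of_ne hj]

lemma sig_top {n k : ℕ} (b0 : Fin k) (s : Fin n → Fin k) :
    sig b0 s n = s := by
  funext j; simp [sig, j.isLt]

lemma sig_self {n k : ℕ} (b0 : Fin k) (s : Fin n → Fin k) (m : Fin n) :
    sig b0 s (m : ℕ) m = b0 := by
  simp [sig]

lemma potential_of_cyc {n k : ℕ} (hk : 1 ≤ k) {c : Fin n → (Fin n → Fin k) → ℝ}
    (H : ∀ i m : Fin n, i ≠ m → Cyc c i m) : IsPotentialGame c := by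
  classical
  set b0 : Fin k := ⟨0, hk⟩ with hb0
  refine ⟨fun s => ∑ m : Fin n, (c m (sig b0 s ((m : ℕ) + 1)) - c m (sig b0 s m)), ?_⟩
  intro i s x y
  set Δ : (Fin n → Fin k) → ℝ :=
    fun t => c i (Function.update t i x) - c i (Function.update t i y) with hΔ
  set G : ℕ → ℝ := fun m => if m ≤ (i : ℕ) then 0 else Δ (sig b0 s m) with hG
  have hstep : ∀ m : Fin n,
      (c m (sig b0 (Function.update s i x) ((m : ℕ) + 1))
          - c m (sig b0 (Function.update s i x) m))
        - (c m (sig b0 (Function.update s i y) ((m : ℕ) + 1))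
          - c m (sig b0 (Function.update s i y) m))
      = G ((m : ℕ) + 1) - G (m : ℕ) := by
    intro m
    rcases lt_trichotomy ((m : ℕ)) ((i : ℕ)) with hlt | heq | hgt
    · -- m < i : everything cancels
      rw [sig_update, sig_update, sig_update, sig_update,
        if_neg (by omega), if_neg (by omega), if_neg (by omega), if_neg (by omega)]
      rw [hG]
      simp only [if_pos (by omega : (m : ℕ) + 1 ≤ (i : ℕ)),
        if_pos (by omega : (m : ℕ) ≤ (i : ℕ))]
      ring
    · -- m = i
      have hmi : m = i := Fin.ext heq
      subst hmi
      rw [sig_update, sig_update, sig_update, sig_update,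
        if_pos (by omega), if_neg (by omega), if_pos (by omega), if_neg (by omega)]
      rw [sig_succ, Function.update_idem, Function.update_idem]
      rw [hG]
      simp only [if_neg (by omega : ¬ ((m : ℕ) + 1 ≤ (m : ℕ))),
        if_pos (le_refl (m : ℕ))]
      rw [hΔ]
      simp only [sig_succ, Function.update_idem]
      ring
    · -- i < m
      have hne : i ≠ m := fun h => by omega
      have hmne : m ≠ i := fun h => by omega
      rw [sig_update, sig_update, sig_update, sig_update,
        if_pos (by omega), if_pos (by omega), if_pos (by omega), if_pos (by omega)]
      rw [hG]
      simp only [if_neg (by omega : ¬ ((m : ℕ) + 1 ≤ (i : ℕ))),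
        if_neg (by omega : ¬ ((m : ℕ) ≤ (i : ℕ)))]
      rw [hΔ]
      have hcyc := H i m hne (sig b0 s (m : ℕ)) x y (s m) b0
      have e1 : sig b0 s ((m : ℕ) + 1) = Function.update (sig b0 s (m : ℕ)) m (s m) :=
        sig_succ b0 s m
      have e2 : ∀ z : Fin k,
          Function.update (Function.update (sig b0 s (m : ℕ)) m (s m)) i z
            = Function.update (Function.update (sig b0 s (m : ℕ)) i z) m (s m) := by
        intro z; rw [Function.update_comm hmne]
      have e3 : ∀ z : Fin k,
          Function.update (Function.update (sig b0 s (m : ℕ)) i z) m b0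
            = Function.update (sig b0 s (m : ℕ)) i z := by
        intro z
        funext j'
        by_cases hj' : j' = m
        · subst hj'
          rw [Function.update_self, Function.update_of_ne hmne, sig_self]
        · rw [Function.update_of_ne hj']
      rw [e3 x, e3 y] at hcyc
      rw [e1]
      simp only [e2]
      linarith
  have hsum : ∀ t : Fin n → Fin k,
      (∑ m : Fin n, (c m (sig b0 t ((m : ℕ) + 1)) - c m (sig b0 t m))) = 
      (∑ m : Fin n, (c m (sig b0 t ((m : ℕ) + 1)) - c m (sig b0 t m))) := fun _ => rfl
  have key : (∑ m : Fin n, (c m (sig b0 (Function.update s i x) ((m : ℕ) + 1))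
        - c m (sig b0 (Function.update s i x) m)))
      - (∑ m : Fin n, (c m (sig b0 (Function.update s i y) ((m : ℕ) + 1))
        - c m (sig b0 (Function.update s i y) m)))
      = ∑ m : Fin n, (G ((m : ℕ) + 1) - G (m : ℕ)) := by
    rw [← Finset.sum_sub_distrib]
    exact Finset.sum_congr rfl fun m _ => hstep m
  have tele : (∑ m : Fin n, (G ((m : ℕ) + 1) - G (m : ℕ))) = G n - G 0 := by
    rw [Fin.sum_univ_eq_sum_range (fun m => G (m + 1) - G m)]
    exact Finset.sum_range_sub G n
  have hG0 : G 0 = 0 := by rw [hG]; simp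
  have hGn : G n = Δ s := by
    simp only [hG]
    rw [if_neg (by have := i.isLt; omega), sig_top]
  simp only [key, tele, hG0, hGn, hΔ, sub_zero]

theorem stmt14 (n k : ℕ) (hn : 2 ≤ n) (hk : 1 ≤ k)
    (c : Fin n → (Fin n → Fin k) → ℝ) :
    IsPotentialGame c ↔
      ∀ i j : Fin n, i < j → ∀ (s : Fin n → Fin k) (x y : Fin k),
        relPay c i j s x y =
          (1 / (k : ℝ)) * (∑ y' : Fin k, relPay c i j s x y')
            + (1 / (k : ℝ)) * (∑ x' : Fin k, relPay c i j s x' y)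
            - (1 / ((k : ℝ) ^ 2)) * (∑ x' : Fin k, ∑ y' : Fin k, relPay c i j s x' y') := by
  constructor
  · intro hpot i j hij s x y
    exact avg_of_cyc hk (ne_of_lt hij) (cyc_of_potential hpot (ne_of_lt hij)) s x y
  · intro H
    apply potential_of_cyc hk
    intro i m him
    rcases lt_or_gt_of_ne him with h | h
    · exact cyc_of_avg h (H i m h)
    · exact cyc_symm (ne_of_lt h) (cyc_of_avg h (H m i h))
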